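/- Let w be an infinite word with finite appearance constant A_w. Then for every n ≥ 1, the prefix w[0..n-1] has a string attractor of size O(A_w · log n). -/

import Mathlib

def IsAttractor {α : Type*} (w : ℕ → α) (n : ℕ) (S : Finset ℕ) : Prop :=
  (∀ s ∈ S, s < n) ∧
  ∀ i j : ℕ, i ≤ j → j < n →
    ∃ i' j' : ℕ, i' ≤ j' ∧ j' < n ∧ j' - i' = j - i ∧
      (∀ t, t ≤ j - i → w (i' + t) = w (i + t)) ∧
      ∃ s ∈ S, i' ≤ s ∧ s ≤ j'

/-- In any window `[a, a + d)` with `d > 0` there is a multiple of `d`. -/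
lemma exists_mult_in_window (d a : ℕ) (hd : 0 < d) :
    ∃ s, d ∣ s ∧ a ≤ s ∧ s < a + d := by
  refine ⟨d * ((a + d - 1) / d), Dvd.intro _ rfl, ?_, ?_⟩ <;>
  · have h1 := Nat.div_add_mod (a + d - 1) d
    have h2 := Nat.mod_lt (a + d - 1) hd
    set x := d * ((a + d - 1) / d) with hx
    omega

/-- If `w` has finite appearance constant `A`, then the prefix `w[0..n-1]` has a
string attractor of size `O(A · log n)`. -/
theorem attractor_log_of_appearance :
    ∃ c : ℕ, ∀ (α : Type) (w : ℕ → α) (A : ℕ),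
      (∀ m i : ℕ, ∃ j : ℕ, j + m ≤ A * m ∧ ∀ t < m, w (j + t) = w (i + t)) →
      ∀ n : ℕ, 1 ≤ n →
        ∃ S : Finset ℕ, IsAttractor w n S ∧
          S.card ≤ c * A * (Nat.log 2 n + 1) := by
  refine ⟨2, fun α w A hA n hn => ?_⟩
  set K := Nat.log 2 n with hK
  set M : ℕ → Finset ℕ := fun k =>
    (Finset.range (min n (A * 2 ^ (k + 1)))).filter (fun s => 2 ^ k ∣ s) with hM
  refine ⟨(Finset.range (K + 1)).biUnion M, ⟨?_, ?_⟩, ?_⟩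
  · intro s hs
    simp only [hM, Finset.mem_biUnion, Finset.mem_filter, Finset.mem_range] at hs
    obtain ⟨k, -, hs, -⟩ := hs
    exact lt_of_lt_of_le hs (min_le_left _ _)
  · intro i j hij hjn
    set m := j - i + 1 with hm
    set k := Nat.log 2 m with hk
    have hm1 : 1 ≤ m := by omega
    have hmn : m ≤ n := by omega
    have hkK : k ≤ K := Nat.log_mono_right hmn
    have h2k : 2 ^ k ≤ m := Nat.pow_log_le_self 2 (by omega)
    have h2k1 : m < 2 ^ (k + 1) := Nat.lt_pow_succ_log_self (by norm_num) m
    have hAm : A * m ≤ A * 2 ^ (k + 1) := Nat.mul_le_mul_left A (le_of_lt h2k1)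
    obtain ⟨j₀, hj₀, hocc⟩ := hA m i
    have hmemS : ∀ s, 2 ^ k ∣ s → s < n → s < A * 2 ^ (k + 1) →
        s ∈ (Finset.range (K + 1)).biUnion M := by
      intro s hdvd hsn hsA
      simp only [hM, Finset.mem_biUnion, Finset.mem_filter, Finset.mem_range]
      exact ⟨k, by omega, lt_min hsn hsA, hdvd⟩
    by_cases hcase : j₀ + m ≤ n
    · -- use the early occurrence at j₀
      obtain ⟨s, hdvd, hs1, hs2⟩ := exists_mult_in_window (2 ^ k) j₀ (Nat.pow_pos (by norm_num))
      refine ⟨j₀, j₀ + (j - i), by omega, by omega, by omega,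
        fun t ht => hocc t (by omega), s, ?_, by omega, by omega⟩
      exact hmemS s hdvd (by omega) (by omega)
    · -- the early occurrence overflows, so n < A * 2^(k+1); use the trivial occurrence
      have hnA : n < A * 2 ^ (k + 1) := by omega
      obtain ⟨s, hdvd, hs1, hs2⟩ := exists_mult_in_window (2 ^ k) i (Nat.pow_pos (by norm_num))
      exact ⟨i, j, hij, hjn, rfl, fun t ht => rfl, s,
        hmemS s hdvd (by omega) (by omega), by omega, by omega⟩
  · -- cardinality bound
    calc ((Finset.range (K + 1)).biUnion M).card
        ≤ ∑ k ∈ Finset.range (K + 1), (M k).card := Finset.card_biUnion_le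
      _ ≤ ∑ k ∈ Finset.range (K + 1), 2 * A := by
          refine Finset.sum_le_sum fun k _ => ?_
          have hsub : M k ⊆ Finset.image (fun t => 2 ^ k * t) (Finset.range (2 * A)) := by
            intro s hs
            simp only [hM, Finset.mem_filter, Finset.mem_range] at hs
            obtain ⟨hsr, t, rfl⟩ := hs
            have h1 : 2 ^ k * t < A * 2 ^ (k + 1) := lt_of_lt_of_le hsr (min_le_right _ _)
            have h2 : A * 2 ^ (k + 1) = 2 ^ k * (2 * A) := by ring
            have ht : t < 2 * A := Nat.lt_of_mul_lt_mul_left (a := 2 ^ k) (by omega)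
            exact Finset.mem_image.mpr ⟨t, Finset.mem_range.mpr ht, rfl⟩
          calc (M k).card ≤ _ := Finset.card_le_card hsub
            _ ≤ (Finset.range (2 * A)).card := Finset.card_image_le
            _ = 2 * A := Finset.card_range _
      _ = 2 * A * (K + 1) := by
          rw [Finset.sum_const, Finset.card_range]; ring
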